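/- Among all complete k-partite graphs on n vertices, the Turán graph T(n,k) maximizes the number of copies of K_r for every r ≤ k. More precisely, if a complete k-partite graph T has two parts A, B with |A| ≤ |B| − 2, then moving one vertex from B to A does not decrease, and strictly increases when r ≥ 2 and k ≥ r, the number of copies of K_r. -/

import Mathlib

open SimpleGraph Filter Asymptotics Finset

/-- The set of copies of `H` in `G`: subgraphs of `G` isomorphic to `H`. -/
def SimpleGraph.copySet {α V : Type*} (H : SimpleGraph α) (G : SimpleGraph V) :
    Set G.Subgraph := {C | Nonempty (H ≃g C.coe)}

/-- The number of (unlabeled) copies of `H` in `G`, i.e. `N(H,G)`. -/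
noncomputable def copyCount {α V : Type*} (H : SimpleGraph α) (G : SimpleGraph V) : ℕ :=
  (H.copySet G).ncard

/-- `G` is `F`-free: it contains no subgraph isomorphic to `F`. -/
def FFree {β V : Type*} (F : SimpleGraph β) (G : SimpleGraph V) : Prop := F.copySet G = ∅

/-- The generalized Turán number `ex(n, H, F)`. -/
noncomputable def exGen {α β : Type*} (n : ℕ) (H : SimpleGraph α) (F : SimpleGraph β) : ℕ :=
  sSup {m | ∃ G : SimpleGraph (Fin n), FFree F G ∧ copyCount H G = m}

/-- The complete multipartite graph with part sizes `a 0, …, a (k-1)`. -/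
def CMP (k : ℕ) (a : Fin k → ℕ) : SimpleGraph (Σ i : Fin k, Fin (a i)) :=
  SimpleGraph.comap Sigma.fst ⊤

set_option linter.unusedVariables false
set_option linter.unusedSectionVars false
set_option linter.unreachableTactic false
set_option linter.unusedTactic false

section Aux

variable {V : Type*} [Fintype V] [DecidableEq V]

/-- The subgraph on vertex set `s`, induced from `G`. -/
def cliqueSubgraph (G : SimpleGraph V) (s : Finset V) : G.Subgraph where
  verts := ↑s
  Adj x y := x ∈ s ∧ y ∈ s ∧ G.Adj x y
  adj_sub h := h.2.2
  edge_vert h := h.1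
  symm := ⟨fun x y h => ⟨h.2.1, h.1, h.2.2.symm⟩⟩

lemma cliqueSubgraph_injective (G : SimpleGraph V) : Function.Injective (cliqueSubgraph G) := by
  intro s t h
  have : (↑s : Set V) = ↑t := congrArg SimpleGraph.Subgraph.verts h
  exact_mod_cast this

lemma copy_adj {r : ℕ} {G : SimpleGraph V} {C : G.Subgraph}
    (e : completeGraph (Fin r) ≃g C.coe) {x y : V} :
    C.Adj x y ↔ x ∈ C.verts ∧ y ∈ C.verts ∧ x ≠ y := by
  constructor
  · intro h
    exact ⟨C.edge_vert h, C.edge_vert h.symm, (C.adj_sub h).ne⟩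
  · rintro ⟨hx, hy, hne⟩
    have hne' : (⟨x, hx⟩ : C.verts) ≠ ⟨y, hy⟩ := fun h => hne (congrArg Subtype.val h)
    have hadj : (completeGraph (Fin r)).Adj (e.symm ⟨x, hx⟩) (e.symm ⟨y, hy⟩) :=
      fun h => hne' (e.symm.toEquiv.injective h)
    have := e.map_rel_iff.mpr hadj
    simpa using this

lemma copySet_eq (r : ℕ) (G : SimpleGraph V) [DecidableRel G.Adj] :
    SimpleGraph.copySet (completeGraph (Fin r)) G = cliqueSubgraph G '' ↑(G.cliqueFinset r) := by
  ext C
  constructor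
  · rintro ⟨e⟩
    have hfin : C.verts.Finite := C.verts.toFinite
    refine ⟨hfin.toFinset, ?_, ?_⟩
    · have hcoe : (↑hfin.toFinset : Set V) = C.verts := hfin.coe_toFinset
      have hcard : hfin.toFinset.card = r := by
        rw [← Set.ncard_eq_toFinset_card _ hfin]
        have : Nat.card C.verts = Nat.card (Fin r) := Nat.card_congr e.toEquiv.symm
        simpa [Nat.card_coe_set_eq] using this
      rw [Finset.mem_coe, mem_cliqueFinset_iff]
      refine ⟨?_, hcard⟩
      intro x hx y hy hne
      simp only [Finset.mem_coe, hfin.mem_toFinset] at hx hy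
      exact C.adj_sub ((copy_adj e).mpr ⟨hx, hy, hne⟩)
    · apply SimpleGraph.Subgraph.ext
      · exact hfin.coe_toFinset
      · ext x y
        show (x ∈ hfin.toFinset ∧ y ∈ hfin.toFinset ∧ G.Adj x y) ↔ C.Adj x y
        simp only [hfin.mem_toFinset]
        constructor
        · rintro ⟨hx, hy, hxy⟩
          exact (copy_adj e).mpr ⟨hx, hy, hxy.ne⟩
        · intro h
          exact ⟨C.edge_vert h, C.edge_vert h.symm, C.adj_sub h⟩
  · rintro ⟨s, hs, rfl⟩
    rw [Finset.mem_coe, mem_cliqueFinset_iff] at hs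
    have f : Fin r ≃ ↥s := (s.equivFin.trans (finCongr hs.card_eq)).symm
    refine ⟨⟨f, ?_⟩⟩
    intro u v
    show (cliqueSubgraph G s).Adj ↑(f u) ↑(f v) ↔ u ≠ v
    constructor
    · intro h
      intro hc
      exact h.2.2.ne (by rw [hc])
    · intro h
      have hval : ((f u : ↥s) : V) ≠ ((f v : ↥s) : V) := by
        intro hc
        exact h (f.injective (Subtype.ext hc))
      exact ⟨(f u).2, (f v).2, hs.1 (f u).2 (f v).2 hval⟩

lemma copyCount_complete (r : ℕ) (G : SimpleGraph V) [DecidableRel G.Adj] :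
    _root_.copyCount (completeGraph (Fin r)) G = (G.cliqueFinset r).card := by
  rw [_root_.copyCount, copySet_eq, Set.ncard_image_of_injective _ (cliqueSubgraph_injective G),
    Set.ncard_coe_finset]

lemma comap_clique_card (k r : ℕ) (f : V → Fin k) :
    ((SimpleGraph.comap f (⊤ : SimpleGraph (Fin k))).cliqueFinset r).card
      = ∑ s ∈ (univ : Finset (Fin k)).powersetCard r,
          ∏ i ∈ s, (univ.filter (fun v => f v = i)).card := by
  set G' := SimpleGraph.comap f (⊤ : SimpleGraph (Fin k)) with hG'
  have hadj : ∀ x y : V, G'.Adj x y ↔ f x ≠ f y := fun x y => Iff.rfl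
  have hinjOn : ∀ S : Finset V, G'.IsNClique r S → ∀ x ∈ S, ∀ y ∈ S, f x = f y → x = y := by
    intro S hS x hx y hy hxy
    by_contra hne
    exact ((hadj x y).mp (hS.1 hx hy hne)) hxy
  rw [Finset.card_eq_sum_card_fiberwise
      (f := fun S => S.image f) (t := (univ : Finset (Fin k)).powersetCard r)
      (fun S hS => by
        rw [Finset.mem_coe, mem_cliqueFinset_iff] at hS
        rw [Finset.mem_coe, Finset.mem_powersetCard_univ, Finset.card_image_of_injOn
          (fun x hx y hy h => hinjOn S hS x hx y hy h)]
        exact hS.card_eq)]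
  refine Finset.sum_congr rfl (fun s hs => ?_)
  rw [Finset.mem_powersetCard_univ] at hs
  rw [← Finset.card_pi]
  -- uniqueness fact for members of the fiber
  have hex : ∀ S : Finset V, G'.IsNClique r S → S.image f = s →
      ∀ i ∈ s, ∃! v, v ∈ S ∧ f v = i := by
    intro S hSc hSi i hi
    rw [← hSi, Finset.mem_image] at hi
    obtain ⟨v, hv, hfv⟩ := hi
    exact ⟨v, ⟨hv, hfv⟩, fun w hw => hinjOn S hSc w hw.1 v hv (hw.2.trans hfv.symm)⟩
  refine (Finset.card_bij
    (fun g _ => s.attach.image (fun i => g i.1 i.2)) ?_ ?_ ?_).symm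
  · -- maps into the fiber
    intro g hg
    rw [Finset.mem_pi] at hg
    have hfg : ∀ (i : Fin k) (hi : i ∈ s), f (g i hi) = i := by
      intro i hi
      have := hg i hi
      simpa using (Finset.mem_filter.mp this).2
    have hinj : ∀ (x : {a // a ∈ s}) (hx : x ∈ s.attach) (y : {a // a ∈ s})
        (hy : y ∈ s.attach), g x.1 x.2 = g y.1 y.2 → x = y := by
      intro x _ y _ h
      have : f (g x.1 x.2) = f (g y.1 y.2) := by rw [h]
      rw [hfg, hfg] at this
      exact Subtype.ext this
    have himg : (s.attach.image (fun i => g i.1 i.2)).image f = s := by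
      rw [Finset.image_image]
      have : (f ∘ fun i : {a // a ∈ s} => g i.1 i.2) = fun i => i.1 := by
        funext i; exact hfg i.1 i.2
      rw [this, Finset.attach_image_val]
    rw [Finset.mem_filter, mem_cliqueFinset_iff]
    refine ⟨⟨?_, ?_⟩, himg⟩
    · intro x hx y hy hne
      simp only [Finset.coe_image, Set.mem_image, Finset.mem_coe, Finset.mem_attach] at hx hy
      obtain ⟨i₁, -, rfl⟩ := hx
      obtain ⟨i₂, -, rfl⟩ := hy
      rw [hadj, hfg, hfg]
      intro hc
      exact hne (by rw [Subtype.ext hc])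
    · rw [Finset.card_image_of_injOn (fun x hx y hy h => hinj x hx y hy h),
        Finset.card_attach, hs]
  · -- injective
    intro g₁ hg₁ g₂ hg₂ h
    rw [Finset.mem_pi] at hg₁ hg₂
    have hfg₁ : ∀ (i : Fin k) (hi : i ∈ s), f (g₁ i hi) = i := fun i hi => by
      simpa using (Finset.mem_filter.mp (hg₁ i hi)).2
    have hfg₂ : ∀ (i : Fin k) (hi : i ∈ s), f (g₂ i hi) = i := fun i hi => by
      simpa using (Finset.mem_filter.mp (hg₂ i hi)).2
    funext i hi
    have h' : s.attach.image (fun j : {a // a ∈ s} => g₁ j.1 j.2)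
        = s.attach.image (fun j : {a // a ∈ s} => g₂ j.1 j.2) := h
    have hmem : g₁ i hi ∈ s.attach.image (fun j : {a // a ∈ s} => g₂ j.1 j.2) := by
      rw [← h']
      exact Finset.mem_image.mpr ⟨⟨i, hi⟩, Finset.mem_attach _ _, rfl⟩
    obtain ⟨⟨j, hjs⟩, -, hj⟩ := Finset.mem_image.mp hmem
    have hji : f (g₂ j hjs) = f (g₁ i hi) := by rw [hj]
    rw [hfg₁, hfg₂] at hji
    subst hji
    exact hj.symm
  · -- surjective
    intro S hS
    rw [Finset.mem_filter, mem_cliqueFinset_iff] at hS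
    obtain ⟨hSc, hSi⟩ := hS
    refine ⟨fun i hi => S.choose (fun v => f v = i) (hex S hSc hSi i hi), ?_, ?_⟩
    · rw [Finset.mem_pi]
      intro i hi
      rw [Finset.mem_filter]
      exact ⟨Finset.mem_univ _, S.choose_property (fun v => f v = i) (hex S hSc hSi i hi)⟩
    · -- image equals S
      apply Finset.eq_of_subset_of_card_le
      · intro x hx
        obtain ⟨j, -, hj⟩ := Finset.mem_image.mp hx
        rw [← hj]
        exact S.choose_mem _ _
      · have hinj : ∀ (x : {a // a ∈ s}) (hx : x ∈ s.attach) (y : {a // a ∈ s})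
            (hy : y ∈ s.attach),
            S.choose (fun v => f v = x.1) (hex S hSc hSi x.1 x.2)
              = S.choose (fun v => f v = y.1) (hex S hSc hSi y.1 y.2) → x = y := by
          intro x _ y _ h
          have h1 := S.choose_property (fun v => f v = x.1) (hex S hSc hSi x.1 x.2)
          have h2 := S.choose_property (fun v => f v = y.1) (hex S hSc hSi y.1 y.2)
          rw [h] at h1
          exact Subtype.ext (h1.symm.trans h2)
        rw [Finset.card_image_of_injOn (fun x hx y hy h => hinj x hx y hy h),
          Finset.card_attach, hs, hSc.card_eq]


lemma copyCount_comap {V : Type*} [Fintype V] [DecidableEq V] (k r : ℕ) (f : V → Fin k) :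
    _root_.copyCount (completeGraph (Fin r)) (SimpleGraph.comap f (⊤ : SimpleGraph (Fin k)))
      = ∑ s ∈ (univ : Finset (Fin k)).powersetCard r,
          ∏ i ∈ s, (univ.filter (fun v => f v = i)).card :=
  (copyCount_complete r _).trans (comap_clique_card k r f)

end Aux

section Esec


variable {k : ℕ}

/-- sum over subsets of `u` of size `r` of products. -/
def Esub (u : Finset (Fin k)) (r : ℕ) (a : Fin k → ℕ) : ℕ :=
  ∑ s ∈ u.powersetCard r, ∏ l ∈ s, a l

def E (k r : ℕ) (a : Fin k → ℕ) : ℕ := Esub univ r a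

lemma Esub_congr (u : Finset (Fin k)) (r : ℕ) (a b : Fin k → ℕ)
    (h : ∀ l ∈ u, a l = b l) : Esub u r a = Esub u r b := by
  refine Finset.sum_congr rfl (fun s hs => ?_)
  rw [Finset.mem_powersetCard] at hs
  exact Finset.prod_congr rfl (fun l hl => h l (hs.1 hl))

lemma Esub_zero (u : Finset (Fin k)) (a : Fin k → ℕ) : Esub u 0 a = 1 := by
  simp [Esub]

lemma Esub_split (u : Finset (Fin k)) {i : Fin k} (hi : i ∈ u) (m : ℕ) (a : Fin k → ℕ) :
    Esub u (m + 1) a = a i * Esub (u.erase i) m a + Esub (u.erase i) (m + 1) a := by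
  unfold Esub
  conv_lhs => rw [← Finset.insert_erase hi]
  rw [Finset.powersetCard_succ_insert (Finset.notMem_erase i u)]
  rw [Finset.sum_union ?disj]
  case disj =>
    rw [Finset.disjoint_left]
    intro t ht hti
    rw [Finset.mem_powersetCard] at ht
    obtain ⟨t', ht', rfl⟩ := Finset.mem_image.mp hti
    exact (Finset.notMem_erase i u) (ht.1 (Finset.mem_insert_self i t'))
  rw [Finset.sum_image ?inj]
  case inj =>
    intro x hx y hy hxy
    rw [Finset.mem_coe, Finset.mem_powersetCard] at hx hy
    have hxi : i ∉ x := fun h => Finset.notMem_erase i u (hx.1 h)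
    have hyi : i ∉ y := fun h => Finset.notMem_erase i u (hy.1 h)
    rw [← Finset.erase_insert hxi, hxy, Finset.erase_insert hyi]
  rw [add_comm]
  congr 1
  rw [Finset.mul_sum]
  refine Finset.sum_congr rfl (fun s hs => ?_)
  rw [Finset.mem_powersetCard] at hs
  have : i ∉ s := fun h => Finset.notMem_erase i u (hs.1 h)
  rw [Finset.prod_insert this]

lemma one_le_Esub (u : Finset (Fin k)) (m : ℕ) (a : Fin k → ℕ) (hm : m ≤ u.card)
    (ha : ∀ l, 1 ≤ a l) : 1 ≤ Esub u m a := by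
  obtain ⟨t, ht, htc⟩ := Finset.exists_subset_card_eq hm
  have hmem : t ∈ u.powersetCard m := Finset.mem_powersetCard.mpr ⟨ht, htc⟩
  calc 1 ≤ ∏ l ∈ t, a l := Finset.one_le_prod' (fun l _ => ha l)
    _ ≤ Esub u m a := Finset.single_le_sum (f := fun s => ∏ l ∈ s, a l) (fun s _ => Nat.zero_le _) hmem

lemma Esub_one (u : Finset (Fin k)) (a : Fin k → ℕ) : Esub u 1 a = ∑ l ∈ u, a l := by
  unfold Esub
  rw [Finset.powersetCard_one, Finset.sum_map]
  simp

lemma sum_update2 (a : Fin k → ℕ) {i j : Fin k} (hij : i ≠ j) (g : ℕ → ℕ) :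
    ∑ l, g (Function.update (Function.update a i (a i + 1)) j (a j - 1) l)
      = g (a j - 1) + (g (a i + 1) + ∑ l ∈ (univ.erase j).erase i, g (a l)) := by
  have h1 : (fun l => g (Function.update (Function.update a i (a i + 1)) j (a j - 1) l))
      = Function.update (Function.update (g ∘ a) i (g (a i + 1))) j (g (a j - 1)) := by
    funext l
    rcases eq_or_ne l j with rfl | hlj
    · simp
    · rcases eq_or_ne l i with rfl | hli
      · simp [Function.update_of_ne hlj, Function.update_self]
      · simp [Function.update_of_ne hlj, Function.update_of_ne hli]
  rw [h1, Finset.sum_update_of_mem (Finset.mem_univ j), Finset.sdiff_singleton_eq_erase]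
  congr 1
  rw [Finset.sum_update_of_mem (Finset.mem_erase.mpr ⟨hij, Finset.mem_univ i⟩),
    Finset.sdiff_singleton_eq_erase]
  rfl

lemma E_move (r : ℕ) (a : Fin k → ℕ) {i j : Fin k} (hij : i ≠ j) (h2 : a i + 2 ≤ a j) :
    E k r a ≤ E k r (Function.update (Function.update a i (a i + 1)) j (a j - 1))
    ∧ (2 ≤ r → r ≤ k → (∀ l, 1 ≤ a l) →
       E k r a < E k r (Function.update (Function.update a i (a i + 1)) j (a j - 1))) := by
  set a' := Function.update (Function.update a i (a i + 1)) j (a j - 1) with ha'def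
  have ha'i : a' i = a i + 1 := by
    rw [ha'def, Function.update_of_ne hij, Function.update_self]
  have ha'j : a' j = a j - 1 := by rw [ha'def, Function.update_self]
  have ha'o : ∀ l, l ≠ i → l ≠ j → a' l = a l := fun l hli hlj => by
    rw [ha'def, Function.update_of_ne hlj, Function.update_of_ne hli]
  match r with
  | 0 =>
    constructor
    · rw [E, E, Esub_zero, Esub_zero]
    · omega
  | 1 =>
    constructor
    · rw [E, E, Esub_one, Esub_one]
      have h1 := sum_update2 a hij id
      simp only [id_eq] at h1
      rw [ha'def] at *
      rw [h1]
      rw [← Finset.add_sum_erase _ a (Finset.mem_univ j),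
        ← Finset.add_sum_erase _ a (Finset.mem_erase.mpr ⟨hij, Finset.mem_univ i⟩)]
      omega
    · omega
  | (m+2) =>
    have hji : j ∈ univ.erase i := Finset.mem_erase.mpr ⟨hij.symm, Finset.mem_univ j⟩
    set u2 := (univ.erase i).erase j with hu2
    have hmemu2 : ∀ l ∈ u2, l ≠ i ∧ l ≠ j := by
      intro l hl
      rw [hu2, Finset.mem_erase, Finset.mem_erase] at hl
      exact ⟨hl.2.1, hl.1⟩
    set P0 := Esub u2 m a with hP0
    set P1 := Esub u2 (m+1) a with hP1
    set P2 := Esub u2 (m+2) a with hP2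
    have hcongr : ∀ q, Esub u2 q a' = Esub u2 q a := fun q =>
      Esub_congr _ _ _ _ (fun l hl => ha'o l (hmemu2 l hl).1 (hmemu2 l hl).2)
    have hEa : E k (m+2) a = a i * (a j * P0 + P1) + (a j * P1 + P2) := by
      rw [E, Esub_split univ (Finset.mem_univ i) (m+1) a,
        Esub_split (univ.erase i) hji m a, Esub_split (univ.erase i) hji (m+1) a]
    have hEa' : E k (m+2) a' = (a i + 1) * ((a j - 1) * P0 + P1) + ((a j - 1) * P1 + P2) := by
      rw [E, Esub_split univ (Finset.mem_univ i) (m+1) a',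
        Esub_split (univ.erase i) hji m a', Esub_split (univ.erase i) hji (m+1) a',
        ha'i, ha'j, hcongr, hcongr, hcongr]
    obtain ⟨t, ht⟩ : ∃ t, a j = a i + 2 + t := ⟨a j - (a i + 2), by omega⟩
    have hj1 : a j - 1 = a i + 1 + t := by omega
    have hkey : E k (m+2) a' = E k (m+2) a + (t + 1) * P0 := by
      rw [hEa, hEa', hj1, ht]
      ring
    constructor
    · rw [hkey]; exact Nat.le_add_right _ _
    · intro _ hrk hpos
      have hcard : m ≤ u2.card := by
        rw [hu2, Finset.card_erase_of_mem hji, Finset.card_erase_of_mem (Finset.mem_univ i),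
          Finset.card_univ, Fintype.card_fin]
        omega
      have hP0pos : 1 ≤ P0 := one_le_Esub u2 m a hcard hpos
      rw [hkey]
      have : 0 < (t + 1) * P0 := Nat.mul_pos (Nat.succ_pos t) hP0pos
      omega

def tpart (n k : ℕ) (i : Fin k) : ℕ := n / k + if (i : ℕ) < n % k then 1 else 0

lemma card_filter_val_lt (c : ℕ) (hc : c ≤ k) :
    ((univ : Finset (Fin k)).filter (fun l : Fin k => (l : ℕ) < c)).card = c := by
  refine Finset.card_eq_of_bijective (fun j hj => ⟨j, lt_of_lt_of_le hj hc⟩) ?_ ?_ ?_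
  · intro l hl
    rw [Finset.mem_filter] at hl
    exact ⟨l, hl.2, Fin.ext rfl⟩
  · intro j hj
    rw [Finset.mem_filter]
    exact ⟨Finset.mem_univ _, hj⟩
  · intro p q hp hq h
    simpa using congrArg Fin.val h

lemma count_lemma (f : Fin k → ℕ) (x : ℕ) :
    Multiset.count x (Finset.univ.val.map f)
      = ((univ : Finset (Fin k)).filter (fun l => f l = x)).card := by
  rw [Multiset.count_map]
  rw [show ((univ : Finset (Fin k)).filter (fun l => f l = x))
      = (univ : Finset (Fin k)).filter (fun l => x = f l) from
    Finset.filter_congr (fun l _ => by constructor <;> (intro hh; omega))]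
  rfl

lemma E_eq_of_map_eq (r : ℕ) (a b : Fin k → ℕ)
    (h : (univ : Finset (Fin k)).val.map a = (univ : Finset (Fin k)).val.map b) :
    E k r a = E k r b := by
  have ha := Finset.esymm_map_val a univ r
  have hb := Finset.esymm_map_val b univ r
  unfold E Esub
  rw [← ha, ← hb, h]

lemma balanced_eq_tpart (n : ℕ) (hk : 0 < k) (a : Fin k → ℕ)
    (hsum : ∑ i, a i = n) (hbal : ∀ i j : Fin k, a j ≤ a i + 1) :
    (univ : Finset (Fin k)).val.map a = (univ : Finset (Fin k)).val.map (tpart n k) := by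
  obtain ⟨i₀, -, hmin⟩ := Finset.exists_min_image univ a ⟨⟨0, hk⟩, Finset.mem_univ _⟩
  set q := a i₀ with hqdef
  have hq : ∀ l, a l = q ∨ a l = q + 1 := fun l => by
    have h1 := hmin l (Finset.mem_univ l)
    have h2 := hbal i₀ l
    omega
  set c := (univ.filter (fun l => a l = q + 1)).card with hc
  have hcle : c ≤ k := le_trans (Finset.card_filter_le _ _)
    (by rw [Finset.card_univ, Fintype.card_fin])
  have hsplit : (univ.filter (fun l => a l = q + 1)).card
      + (univ.filter (fun l => ¬ (a l = q + 1))).card = k := by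
    rw [Finset.card_filter_add_card_filter_not, Finset.card_univ, Fintype.card_fin]
  have hfilq : (univ.filter (fun l => a l = q)) = (univ.filter (fun l => ¬ (a l = q + 1))) := by
    refine Finset.filter_congr (fun l _ => ?_)
    have := hq l
    constructor <;> (intro h; omega)
  have hsum2 : n = k * q + c := by
    have h1 : ∑ l ∈ univ.filter (fun l => a l = q + 1), a l = c * (q + 1) := by
      rw [Finset.sum_congr rfl (fun l hl => (Finset.mem_filter.mp hl).2), Finset.sum_const,
        smul_eq_mul]
    have h2 : ∑ l ∈ univ.filter (fun l => ¬ (a l = q + 1)), a l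
        = (k - c) * q := by
      have hval : ∀ l ∈ univ.filter (fun l => ¬ (a l = q + 1)), a l = q := by
        intro l hl
        have := (Finset.mem_filter.mp hl).2
        have := hq l
        omega
      rw [Finset.sum_congr rfl hval, Finset.sum_const, smul_eq_mul]
      congr 1
      omega
    have h3 := Finset.sum_filter_add_sum_filter_not univ (fun l => a l = q + 1) a
    rw [h1, h2] at h3
    rw [← hsum, ← h3]
    have : c * (q+1) = c * q + c := by ring
    have h4 : (k - c) * q + c * q = k * q := by
      rw [← Nat.add_mul]
      congr 1
      omega
    linarith
  have hclt : c < k := by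
    rcases Nat.lt_or_ge c k with h | h
    · exact h
    · exfalso
      have heq : univ.filter (fun l => a l = q + 1) = univ :=
        Finset.eq_of_subset_of_card_le (Finset.filter_subset _ _)
          (by rw [Finset.card_univ, Fintype.card_fin]; omega)
      have hi₀ : i₀ ∈ univ.filter (fun l => a l = q + 1) := by
        rw [heq]; exact Finset.mem_univ i₀
      have := (Finset.mem_filter.mp hi₀).2
      omega
  have hdiv : n / k = q := by
    rw [hsum2, Nat.mul_add_div hk, Nat.div_eq_of_lt hclt]
    omega
  have hmod : n % k = c := by rw [hsum2, Nat.mul_add_mod, Nat.mod_eq_of_lt hclt]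
  have htp : ∀ l : Fin k, tpart n k l = if (l : ℕ) < c then q + 1 else q := by
    intro l
    rw [tpart, hdiv, hmod]
    split_ifs <;> omega
  have htc : (univ.filter (fun l => tpart n k l = q + 1)).card = c := by
    have heq : (univ.filter (fun l => tpart n k l = q + 1))
        = (univ : Finset (Fin k)).filter (fun l : Fin k => (l : ℕ) < c) := by
      refine Finset.filter_congr (fun l _ => ?_)
      rw [htp l]
      split_ifs with hsp <;> simp [hsp] <;> omega
    rw [heq, card_filter_val_lt c hcle]
  have htsplit : (univ.filter (fun l => tpart n k l = q + 1)).card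
      + (univ.filter (fun l => ¬ (tpart n k l = q + 1))).card = k := by
    rw [Finset.card_filter_add_card_filter_not, Finset.card_univ, Fintype.card_fin]
  have htfilq : (univ.filter (fun l => tpart n k l = q))
      = (univ.filter (fun l => ¬ (tpart n k l = q + 1))) := by
    refine Finset.filter_congr (fun l _ => ?_)
    rw [htp l]
    split_ifs with hsp <;> constructor <;> intro hh <;> omega
  refine Multiset.ext.mpr (fun x => ?_)
  rw [count_lemma, count_lemma]
  by_cases hx1 : x = q + 1
  · subst hx1
    rw [htc, ← hc]
  · by_cases hx0 : x = q
    · subst hx0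
      rw [hfilq, htfilq]
      omega
    · rw [Finset.filter_false_of_mem, Finset.filter_false_of_mem]
      · intro l _
        have := htp l
        split_ifs at this <;> omega
      · intro l _
        have := hq l
        omega

lemma E_le_tpart (r n : ℕ) (hk : 0 < k) (N : ℕ) :
    ∀ (a : Fin k → ℕ), ∑ i, (a i) ^ 2 ≤ N → ∑ i, a i = n →
      E k r a ≤ E k r (tpart n k) := by
  induction N using Nat.strong_induction_on with
  | _ N ih =>
    intro a hN hsum
    by_cases hex : ∃ i j : Fin k, i ≠ j ∧ a i + 2 ≤ a j
    · obtain ⟨i, j, hij, h2⟩ := hex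
      set a' := Function.update (Function.update a i (a i + 1)) j (a j - 1) with ha'def
      have hmove := (E_move r a hij h2).1
      have hsumold : ∑ l, a l = a j + (a i + ∑ l ∈ (univ.erase j).erase i, a l) := by
        rw [← Finset.add_sum_erase _ a (Finset.mem_univ j),
          ← Finset.add_sum_erase _ a (Finset.mem_erase.mpr ⟨hij, Finset.mem_univ i⟩)]
      have hsumold2 : ∑ l, (a l) ^ 2
          = (a j) ^ 2 + ((a i) ^ 2 + ∑ l ∈ (univ.erase j).erase i, (a l) ^ 2) := by
        rw [← Finset.add_sum_erase _ (fun l => (a l) ^ 2) (Finset.mem_univ j),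
          ← Finset.add_sum_erase _ (fun l => (a l) ^ 2)
            (Finset.mem_erase.mpr ⟨hij, Finset.mem_univ i⟩)]
      have h1 := sum_update2 a hij id
      simp only [id_eq] at h1
      have hsum' : ∑ l, a' l = n := by
        rw [ha'def, h1]
        omega
      have h2s := sum_update2 a hij (fun x => x ^ 2)
      have hsq : ∑ l, (a' l) ^ 2 < ∑ l, (a l) ^ 2 := by
        rw [ha'def, h2s, hsumold2]
        obtain ⟨t, ht⟩ : ∃ t, a j = a i + 2 + t := ⟨a j - (a i + 2), by omega⟩
        have hj1 : a j - 1 = a i + 1 + t := by omega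
        rw [hj1, ht]
        have : (a i + 1 + t) ^ 2 + (a i + 1) ^ 2 < (a i + 2 + t) ^ 2 + (a i) ^ 2 := by
          nlinarith
        omega
      have hlt : ∑ l, (a' l) ^ 2 < N := lt_of_lt_of_le hsq hN
      exact le_trans hmove (ih _ hlt a' (le_refl _) hsum')
    · push_neg at hex
      have hbal : ∀ i j : Fin k, a j ≤ a i + 1 := by
        intro i j
        rcases eq_or_ne i j with rfl | hne
        · omega
        · have := hex i j hne
          omega
      exact le_of_eq (E_eq_of_map_eq r a _ (balanced_eq_tpart n hk a hsum hbal))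


end Esec

section Fibers



lemma fiber_CMP (k : ℕ) (a : Fin k → ℕ) (i : Fin k) :
    ((univ : Finset (Σ i : Fin k, Fin (a i))).filter (fun v => v.1 = i)).card = a i := by
  refine Finset.card_eq_of_bijective (fun j hj => ⟨i, ⟨j, hj⟩⟩) ?_ ?_ ?_
  · rintro ⟨i', x⟩ hx
    rw [Finset.mem_filter] at hx
    obtain ⟨-, h⟩ := hx
    dsimp at h
    subst h
    exact ⟨x.1, x.2, rfl⟩
  · intro j hj
    rw [Finset.mem_filter]
    exact ⟨Finset.mem_univ _, rfl⟩
  · intro p q hp hq h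
    have h2 := sigma_mk_injective h
    simpa using congrArg Fin.val h2

lemma fiber_turan (n k : ℕ) (hk : 0 < k) (i : Fin k) :
    ((univ : Finset (Fin n)).filter
      (fun v : Fin n => (⟨(v : ℕ) % k, Nat.mod_lt _ hk⟩ : Fin k) = i)).card = tpart n k i := by
  rw [tpart]
  refine Finset.card_eq_of_bijective (fun j hj => ⟨j * k + (i : ℕ), ?_⟩) ?_ ?_ ?_
  · -- bound
    by_cases hi : (i : ℕ) < n % k
    · rw [if_pos hi] at hj
      have hj' : j ≤ n / k := by omega
      calc j * k + (i : ℕ) ≤ n / k * k + (i : ℕ) :=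
            Nat.add_le_add_right (Nat.mul_le_mul_right k hj') _
        _ < n / k * k + n % k := by omega
        _ = n := by rw [mul_comm]; exact Nat.div_add_mod n k
    · rw [if_neg hi] at hj
      have h1 : j + 1 ≤ n / k := hj
      calc j * k + (i : ℕ) < j * k + k := by have := i.isLt; omega
        _ = (j + 1) * k := by ring
        _ ≤ n / k * k := Nat.mul_le_mul_right k h1
        _ ≤ n := Nat.div_mul_le_self n k
  · -- surjective
    intro v hv
    rw [Finset.mem_filter] at hv
    have hviq : (v : ℕ) % k = (i : ℕ) := congrArg Fin.val hv.2
    refine ⟨(v : ℕ) / k, ?_, ?_⟩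
    · by_cases hi : (i : ℕ) < n % k
      · have hle : (v : ℕ) / k ≤ n / k := Nat.div_le_div_right (le_of_lt v.isLt)
        rw [if_pos hi]
        omega
      · rw [if_neg hi]
        by_contra hcon
        push_neg at hcon
        have hcon' : n / k ≤ (v : ℕ) / k := by omega
        have hle : n % k ≤ (v : ℕ) % k := by omega
        have hge : n ≤ (v : ℕ) := by
          calc n = k * (n / k) + n % k := (Nat.div_add_mod n k).symm
            _ ≤ k * ((v : ℕ) / k) + (v : ℕ) % k :=
                add_le_add (Nat.mul_le_mul_left k hcon') hle
            _ = (v : ℕ) := Nat.div_add_mod _ k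
        exact absurd v.isLt (not_lt.mpr hge)
    · apply Fin.ext
      show (v : ℕ) / k * k + (i : ℕ) = (v : ℕ)
      rw [← hviq, mul_comm]
      exact Nat.div_add_mod _ k
  · -- maps to filter
    intro j hj
    rw [Finset.mem_filter]
    refine ⟨Finset.mem_univ _, ?_⟩
    apply Fin.ext
    show (j * k + (i : ℕ)) % k = (i : ℕ)
    rw [mul_comm, Nat.mul_add_mod, Nat.mod_eq_of_lt i.isLt]
  · -- injective
    intro p q hp hq h
    have hval : p * k + (i : ℕ) = q * k + (i : ℕ) := congrArg Fin.val h
    have : p * k = q * k := by omega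
    exact Nat.eq_of_mul_eq_mul_right hk this

lemma turan_eq (n k : ℕ) (hk : 0 < k) :
    turanGraph n k
      = SimpleGraph.comap (fun v : Fin n => (⟨(v : ℕ) % k, Nat.mod_lt _ hk⟩ : Fin k))
          (⊤ : SimpleGraph (Fin k)) := by
  ext v w
  show (v : ℕ) % k ≠ (w : ℕ) % k ↔ _
  simp [Fin.ext_iff]


lemma copyCount_CMP (k r : ℕ) (a : Fin k → ℕ) :
    _root_.copyCount (completeGraph (Fin r)) (CMP k a) = E k r a := by
  have h : _root_.copyCount (completeGraph (Fin r)) (CMP k a)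
      = _root_.copyCount (completeGraph (Fin r))
          (SimpleGraph.comap (Sigma.fst : (Σ i : Fin k, Fin (a i)) → Fin k)
            (⊤ : SimpleGraph (Fin k))) := rfl
  rw [h, copyCount_comap]
  unfold E Esub
  exact Finset.sum_congr rfl fun s _ => Finset.prod_congr rfl fun i _ => fiber_CMP k a i

lemma copyCount_turan (n k r : ℕ) (hk : 0 < k) :
    _root_.copyCount (completeGraph (Fin r)) (turanGraph n k) = E k r (tpart n k) := by
  rw [congrArg (_root_.copyCount (completeGraph (Fin r))) (turan_eq n k hk), copyCount_comap]
  unfold E Esub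
  exact Finset.sum_congr rfl fun s _ => Finset.prod_congr rfl fun i _ => fiber_turan n k hk i

end Fibers

theorem stmt3 (n k r : ℕ) (hk : 0 < k) (hr : r ≤ k) (a : Fin k → ℕ)
    (hpos : ∀ i, 1 ≤ a i) (hsum : ∑ i, a i = n) :
    _root_.copyCount (completeGraph (Fin r)) (CMP k a)
        ≤ _root_.copyCount (completeGraph (Fin r)) (turanGraph n k) ∧
      ∀ i j : Fin k, i ≠ j → a i + 2 ≤ a j →
        _root_.copyCount (completeGraph (Fin r)) (CMP k a)
            ≤ _root_.copyCount (completeGraph (Fin r))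
                (CMP k (Function.update (Function.update a i (a i + 1)) j (a j - 1))) ∧
          (2 ≤ r →
            _root_.copyCount (completeGraph (Fin r)) (CMP k a)
              < _root_.copyCount (completeGraph (Fin r))
                  (CMP k (Function.update (Function.update a i (a i + 1)) j (a j - 1)))) := by
  constructor
  · rw [copyCount_CMP, copyCount_turan n k r hk]
    exact E_le_tpart r n hk (∑ i, (a i) ^ 2) a (le_refl _) hsum
  · intro i j hij h2
    have hmove := E_move r a hij h2
    rw [copyCount_CMP, copyCount_CMP]
    exact ⟨hmove.1, fun h2r => hmove.2 h2r hr hpos⟩
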